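/- (n = 2 inequality (32)) Let N_A, N_B ≥ 2. Let E₁^A, E₂^A be ℂ-linear maps on Matrix (Fin N_A) (Fin N_A) ℂ and E₁^B, E₂^B be ℂ-linear maps on Matrix (Fin N_B) (Fin N_B) ℂ, and let ε^A, ε^B ≥ 0 be such that ‖E₁^A(σ₁)‖_HS² + ‖E₂^A(σ₂)‖_HS² ≤ 2ε^A for all density matrices σ₁, σ₂ of size N_A, and ‖E₁^B(τ₁)‖_HS² + ‖E₂^B(τ₂)‖_HS² ≤ 2ε^B for all density matrices τ₁, τ₂ of size N_B. Let ρ = Σ_{i∈s} p_i (ρ_i^A ⊗ₖ ρ_i^B) be a separable state with p_i > 0, Σ p_i = 1, and marginals ρ_A, ρ_B, and define M := (1/2)·Σ_{i∈s} p_i ( E₁^A(ρ_i^A) ⊗ₖ E₁^B(ρ_i^B) + E₂^A(ρ_i^A) ⊗ₖ E₂^B(ρ_i^B) ) + (1/2)·( E₁^A(ρ_A) ⊗ₖ E₂^B(ρ_B) + E₂^A(ρ_A) ⊗ₖ E₁^B(ρ_B) ). Then ‖RM(M)‖_tr ≤ √( ε^A + Re⟨E₁^A(ρ_A), E₂^A(ρ_A)⟩_HS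 ) · √( ε^B + Re⟨E₁^B(ρ_B), E₂^B(ρ_B)⟩_HS ). -/

import Mathlib

open Matrix Kronecker Complex ComplexOrder

noncomputable def traceNorm {m n : Type*} [Fintype m] [Fintype n] [DecidableEq n]
    (M : Matrix m n ℂ) : ℝ :=
  ((((Matrix.isHermitian_conjTranspose_mul_self M).eigenvectorUnitary : Matrix n n ℂ) *
    diagonal (((↑) : ℝ → ℂ) ∘ (√·) ∘ (Matrix.isHermitian_conjTranspose_mul_self M).eigenvalues) *
    (star (Matrix.isHermitian_conjTranspose_mul_self M).eigenvectorUnitary : Matrix n n ℂ))).trace.re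

def realign {NA NB : ℕ} (ρ : Matrix (Fin NA × Fin NB) (Fin NA × Fin NB) ℂ) :
    Matrix (Fin NA × Fin NA) (Fin NB × Fin NB) ℂ :=
  fun p q => ρ (p.1, q.1) (p.2, q.2)

def IsDensityMatrix {n : Type*} [Fintype n] (ρ : Matrix n n ℂ) : Prop :=
  ρ.PosSemidef ∧ ρ.trace = 1

noncomputable def hsNorm {m n : Type*} [Fintype m] [Fintype n] (M : Matrix m n ℂ) : ℝ :=
  Real.sqrt (∑ i, ∑ j, ‖M i j‖ ^ 2)

noncomputable def hsInner {m n : Type*} [Fintype m] [Fintype n] (X Y : Matrix m n ℂ) : ℂ :=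
  (Xᴴ * Y).trace

noncomputable def marginalA {NA NB : ℕ} (ρ : Matrix (Fin NA × Fin NB) (Fin NA × Fin NB) ℂ) :
    Matrix (Fin NA) (Fin NA) ℂ :=
  fun m n => ∑ μ, ρ (m, μ) (n, μ)

noncomputable def marginalB {NA NB : ℕ} (ρ : Matrix (Fin NA × Fin NB) (Fin NA × Fin NB) ℂ) :
    Matrix (Fin NB) (Fin NB) ℂ :=
  fun μ ν => ∑ m, ρ (m, μ) (m, ν)

def SeparableState {NA NB : ℕ} (ρ : Matrix (Fin NA × Fin NB) (Fin NA × Fin NB) ℂ) : Prop :=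
  ∃ (ι : Type) (s : Finset ι) (p : ι → ℝ)
    (ρA : ι → Matrix (Fin NA) (Fin NA) ℂ) (ρB : ι → Matrix (Fin NB) (Fin NB) ℂ),
    (∀ i ∈ s, 0 < p i) ∧ (∑ i ∈ s, p i = 1) ∧
    (∀ i ∈ s, IsDensityMatrix (ρA i)) ∧ (∀ i ∈ s, IsDensityMatrix (ρB i)) ∧
    ρ = ∑ i ∈ s, (p i : ℂ) • (ρA i ⊗ₖ ρB i)

noncomputable def l2OpNorm {n : Type*} [Fintype n] [DecidableEq n] (M : Matrix n n ℂ) : ℝ :=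
  ‖Matrix.toEuclideanCLM (𝕜 := ℂ) (n := n) M‖
local notation "⟪" x ", " y "⟫" => @inner ℂ _ _ x y

section Aux

lemma traceNorm_eq_sum_sqrt {n : Type*} [Fintype n] [DecidableEq n] {m : Type*} [Fintype m]
    (M : Matrix m n ℂ) :
    traceNorm M = ∑ k, Real.sqrt ((Matrix.posSemidef_conjTranspose_mul_self M).1.eigenvalues k) := by
  set hA := Matrix.posSemidef_conjTranspose_mul_self M
  unfold traceNorm
  rw [Matrix.trace_mul_cycle]
  have h1 : (star hA.1.eigenvectorUnitary : Matrix n n ℂ) * hA.1.eigenvectorUnitary.1 = 1 :=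
    hA.1.eigenvectorUnitary.2.1
  rw [h1, one_mul, Matrix.trace_diagonal]
  simp

lemma bessel_aux {E : Type*} [NormedAddCommGroup E] [InnerProductSpace ℂ E]
    {κ : Type*} [Fintype κ] (u : κ → E)
    (hnorm : ∀ k, u k ≠ 0 → ‖u k‖ = 1)
    (horth : ∀ k l, k ≠ l → ⟪u k, u l⟫ = 0) (z : E) :
    ∑ k, ‖⟪u k, z⟫‖ ^ 2 ≤ ‖z‖ ^ 2 := by
  classical
  have horthn : Orthonormal ℂ (fun k : {k // u k ≠ 0} => u k.1) :=
    ⟨fun i => hnorm i.1 i.2, fun i j hij => horth i.1 j.1 (fun h => hij (Subtype.ext h))⟩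
  have h1 : ∑ k, ‖⟪u k, z⟫‖ ^ 2
      = ∑ k ∈ Finset.univ.filter (fun k => u k ≠ 0), ‖⟪u k, z⟫‖ ^ 2 := by
    refine (Finset.sum_filter_of_ne ?_).symm
    exact fun k _ h hk => h (by simp [hk])
  rw [h1, Finset.sum_subtype (p := fun k => u k ≠ 0) _ (by simp)
    (fun k => ‖⟪u k, z⟫‖ ^ 2)]
  exact horthn.sum_inner_products_le (s := Finset.univ) (x := z)

/-- key lemma: trace norm of a sum of rank one matrices -/
lemma traceNorm_le_of_rank_one {m n : Type*} [Fintype m] [Fintype n] [DecidableEq n]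
    (M : Matrix m n ℂ) {ι : Type*} (t : Finset ι)
    (x : ι → EuclideanSpace ℂ m) (y : ι → EuclideanSpace ℂ n)
    (hM : ∀ i j, M i j = ∑ a ∈ t, x a i * y a j) :
    traceNorm M ≤ ∑ a ∈ t, ‖x a‖ * ‖y a‖ := by
  classical
  set hA := Matrix.posSemidef_conjTranspose_mul_self M with hAdef
  set hH := hA.1
  set v : n → EuclideanSpace ℂ n := fun k => hH.eigenvectorBasis k with hv
  set d : n → ℝ := hH.eigenvalues with hd
  have hd0 : ∀ k, 0 ≤ d k := fun k => hA.eigenvalues_nonneg k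
  have hvorth : ∀ k l, ⟪v k, v l⟫ = if k = l then (1:ℂ) else 0 :=
    orthonormal_iff_ite.mp hH.eigenvectorBasis.orthonormal
  set w : n → EuclideanSpace ℂ m :=
    fun k => (WithLp.equiv 2 (m → ℂ)).symm (M *ᵥ ⇑(v k)) with hw
  have hww : ∀ k l, ⟪w k, w l⟫ = (d l : ℂ) * ⟪v k, v l⟫ := by
    intro k l
    have hmv : (Mᴴ * M) *ᵥ ⇑(v l) = (d l : ℝ) • ⇑(v l) := hH.mulVec_eigenvectorBasis l
    calc ⟪w k, w l⟫ = star (M *ᵥ ⇑(v k)) ⬝ᵥ (M *ᵥ ⇑(v l)) :=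
          (EuclideanSpace.inner_toLp_toLp _ _).trans (dotProduct_comm _ _)
      _ = star ⇑(v k) ⬝ᵥ ((Mᴴ * M) *ᵥ ⇑(v l)) := by
          rw [Matrix.star_mulVec, ← Matrix.dotProduct_mulVec, Matrix.mulVec_mulVec]
      _ = (d l : ℂ) * ⟪v k, v l⟫ := by
          rw [hmv, dotProduct_smul, PiLp.inner_apply]
          simp [dotProduct, RCLike.inner_apply, Finset.mul_sum, smul_eq_mul]
          exact Finset.sum_congr rfl fun _ _ => by ring
  have hwnorm : ∀ k, ‖w k‖ ^ 2 = d k := by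
    intro k
    rw [← inner_self_eq_norm_sq (𝕜 := ℂ), hww k k, hvorth k k]
    simp
  have step1 : traceNorm M = ∑ k, ‖w k‖ := by
    rw [traceNorm_eq_sum_sqrt]
    refine Finset.sum_congr rfl fun k _ => ?_
    rw [show (Matrix.posSemidef_conjTranspose_mul_self M).1.eigenvalues k = d k from rfl,
      ← hwnorm k, Real.sqrt_sq (norm_nonneg _)]
  -- the left singular vectors
  set u : n → EuclideanSpace ℂ m := fun k => ((‖w k‖ : ℂ))⁻¹ • w k with hu
  have hip : ∀ k, ‖w k‖ = (⟪u k, w k⟫).re := by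
    intro k
    have h2 : ⟪u k, w k⟫ = ((‖w k‖⁻¹ * ‖w k‖ ^ 2 : ℝ) : ℂ) := by
      rw [hu, inner_smul_left]
      have h3 : ⟪w k, w k⟫ = ((‖w k‖ ^ 2 : ℝ) : ℂ) := by
        rw [hww k k, hvorth k k, hwnorm k]; simp
      rw [h3]
      push_cast
      rw [map_inv₀, Complex.conj_ofReal]
    rw [h2, Complex.ofReal_re]
    by_cases h0 : ‖w k‖ = 0
    · simp [h0]
    · rw [sq, inv_mul_cancel_left₀ h0]
  have hu_norm : ∀ k, u k ≠ 0 → ‖u k‖ = 1 := by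
    intro k hk
    have hwk : w k ≠ 0 := by
      intro h; apply hk; simp [hu, h]
    rw [hu, norm_smul]
    simp [norm_ne_zero_iff.mpr hwk, inv_mul_cancel₀ (norm_ne_zero_iff.mpr hwk)]
  have hu_orth : ∀ k l, k ≠ l → ⟪u k, u l⟫ = 0 := by
    intro k l hkl
    rw [hu, inner_smul_left, inner_smul_right, hww k l, hvorth k l, if_neg hkl]
    ring
  -- coefficients
  set c : ι → n → ℂ := fun a k => ∑ j, y a j * v k j with hc
  have hwsum : ∀ k, w k = ∑ a ∈ t, c a k • x a := by
    intro k
    apply (WithLp.equiv 2 (m → ℂ)).injective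
    funext i
    simp only [hw, Equiv.apply_symm_apply]
    have hrhs : (WithLp.equiv 2 (m → ℂ)) (∑ a ∈ t, c a k • x a) i
        = ∑ a ∈ t, c a k * x a i := by
      have h := map_sum (PiLp.projₗ (𝕜 := ℂ) 2 (fun _ : m => ℂ) i) (fun a => c a k • x a) t
      simp only [PiLp.projₗ_apply, PiLp.smul_apply, smul_eq_mul] at h
      exact h
    rw [hrhs]
    simp only [Matrix.mulVec, dotProduct, hM, Finset.sum_mul]
    rw [Finset.sum_comm]
    refine Finset.sum_congr rfl fun a _ => ?_
    rw [hc, Finset.sum_mul]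
    refine Finset.sum_congr rfl fun j _ => ?_
    ring
  have hiuw : ∀ k, ⟪u k, w k⟫ = ∑ a ∈ t, c a k * ⟪u k, x a⟫ := by
    intro k
    rw [hwsum k, inner_sum]
    exact Finset.sum_congr rfl fun a _ => inner_smul_right _ _ _
  calc traceNorm M = ∑ k, ‖w k‖ := step1
    _ = ∑ k, ∑ a ∈ t, (c a k * ⟪u k, x a⟫).re := by
        refine Finset.sum_congr rfl fun k _ => ?_
        rw [hip k, hiuw k, Complex.re_sum]
    _ = ∑ a ∈ t, ∑ k, (c a k * ⟪u k, x a⟫).re := Finset.sum_comm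
    _ ≤ ∑ a ∈ t, ∑ k, ‖c a k‖ * ‖⟪u k, x a⟫‖ := by
        refine Finset.sum_le_sum fun a _ => Finset.sum_le_sum fun k _ => ?_
        calc (c a k * ⟪u k, x a⟫).re ≤ ‖c a k * ⟪u k, x a⟫‖ := Complex.re_le_norm _
          _ = ‖c a k‖ * ‖⟪u k, x a⟫‖ := norm_mul _ _
    _ ≤ ∑ a ∈ t, Real.sqrt (∑ k, ‖c a k‖ ^ 2) * Real.sqrt (∑ k, ‖⟪u k, x a⟫‖ ^ 2) := by
        exact Finset.sum_le_sum fun a _ => Real.sum_mul_le_sqrt_mul_sqrt _ _ _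
    _ ≤ ∑ a ∈ t, ‖y a‖ * ‖x a‖ := by
        refine Finset.sum_le_sum fun a _ => mul_le_mul ?_ ?_ (Real.sqrt_nonneg _) (norm_nonneg _)
        · set sy : EuclideanSpace ℂ n := (WithLp.equiv 2 (n → ℂ)).symm
            (fun j => (starRingEnd ℂ) (y a j)) with hsy
          have h1 : ∀ k, ‖c a k‖ = ‖⟪v k, sy⟫‖ := by
            intro k
            have h2 : ⟪v k, sy⟫ = (starRingEnd ℂ) (c a k) := by
              simp [hsy, PiLp.inner_apply, RCLike.inner_apply, hc, map_sum,
                WithLp.equiv_symm_apply, PiLp.toLp_apply, mul_comm]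
            rw [h2, RCLike.norm_conj]
          have h3 : ∑ k, ‖c a k‖ ^ 2 ≤ ‖sy‖ ^ 2 := by
            simp_rw [h1]
            exact Orthonormal.sum_inner_products_le sy hH.eigenvectorBasis.orthonormal
          have h4 : ‖sy‖ = ‖y a‖ := by
            rw [hsy, EuclideanSpace.norm_eq, EuclideanSpace.norm_eq]
            simp [WithLp.equiv_symm_apply, PiLp.toLp_apply]
          calc Real.sqrt (∑ k, ‖c a k‖ ^ 2) ≤ Real.sqrt (‖sy‖ ^ 2) := Real.sqrt_le_sqrt h3
            _ = ‖y a‖ := by rw [Real.sqrt_sq (norm_nonneg _), h4]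
        · calc Real.sqrt (∑ k, ‖⟪u k, x a⟫‖ ^ 2) ≤ Real.sqrt (‖x a‖ ^ 2) :=
              Real.sqrt_le_sqrt (bessel_aux u hu_norm hu_orth (x a))
            _ = ‖x a‖ := Real.sqrt_sq (norm_nonneg _)
    _ = ∑ a ∈ t, ‖x a‖ * ‖y a‖ := by
        exact Finset.sum_congr rfl fun a _ => mul_comm _ _

noncomputable def vecL {m n : Type*} [Fintype m] [Fintype n] :
    Matrix m n ℂ →ₗ[ℂ] EuclideanSpace ℂ (m × n) where
  toFun X := (WithLp.equiv 2 (m × n → ℂ)).symm (fun p => X p.1 p.2)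
  map_add' _ _ := rfl
  map_smul' _ _ := rfl

lemma vecL_apply {m n : Type*} [Fintype m] [Fintype n] (X : Matrix m n ℂ) (p : m × n) :
    vecL X p = X p.1 p.2 := rfl

lemma norm_vecL {m n : Type*} [Fintype m] [Fintype n] (X : Matrix m n ℂ) :
    ‖vecL X‖ = hsNorm X := by
  rw [EuclideanSpace.norm_eq, hsNorm, Fintype.sum_prod_type]
  rfl

lemma inner_vecL {m n : Type*} [Fintype m] [Fintype n] (X Y : Matrix m n ℂ) :
    ⟪vecL X, vecL Y⟫ = hsInner X Y := by
  rw [PiLp.inner_apply, hsInner, Matrix.trace]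
  rw [Fintype.sum_prod_type]
  rw [Finset.sum_comm]
  refine Finset.sum_congr rfl fun j _ => ?_
  simp [Matrix.mul_apply, Matrix.diag, RCLike.inner_apply, vecL_apply, Matrix.conjTranspose_apply]
  exact Finset.sum_congr rfl fun _ _ => mul_comm _ _

lemma expand_sum_complex {ι : Type*} (s : Finset ι) (q : ι → ℂ) (hq : ∑ i ∈ s, q i = 1)
    (a1 a2 b1 b2 : ι → ℂ) :
    ∑ i ∈ s, ∑ j ∈ s, q i * q j * ((a1 i + a2 j) * (b1 i + b2 j))
      = ∑ i ∈ s, q i * (a1 i * b1 i) + ∑ i ∈ s, q i * (a2 i * b2 i)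
        + (∑ i ∈ s, q i * a1 i) * (∑ i ∈ s, q i * b2 i)
        + (∑ i ∈ s, q i * a2 i) * (∑ i ∈ s, q i * b1 i) := by
  have row : ∀ i ∈ s, ∑ j ∈ s, q i * q j * ((a1 i + a2 j) * (b1 i + b2 j))
      = q i * (a1 i * b1 i) + (q i * a1 i) * (∑ j ∈ s, q j * b2 j)
        + (∑ j ∈ s, q j * a2 j) * (q i * b1 i) + q i * (∑ j ∈ s, q j * (a2 j * b2 j)) := by
    intro i _
    have : ∀ j ∈ s, q i * q j * ((a1 i + a2 j) * (b1 i + b2 j))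
        = (q i * (a1 i * b1 i)) * q j + (q i * a1 i) * (q j * b2 j)
          + (q j * a2 j) * (q i * b1 i) + q i * (q j * (a2 j * b2 j)) := by
      intro j _; ring
    rw [Finset.sum_congr rfl this]
    simp only [Finset.sum_add_distrib, ← Finset.mul_sum, ← Finset.sum_mul, hq]
    ring
  rw [Finset.sum_congr rfl row]
  simp only [Finset.sum_add_distrib, ← Finset.mul_sum, ← Finset.sum_mul, hq]
  ring

lemma double_sum_expand {ι : Type*} (s : Finset ι) (q : ι → ℝ) (hq : ∑ i ∈ s, q i = 1)
    (F G : ι → ℝ) (R : ι → ι → ℝ) :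
    ∑ i ∈ s, ∑ j ∈ s, q i * q j / 2 * (F i + 2 * R i j + G j)
      = (∑ i ∈ s, q i * (F i + G i)) / 2 + ∑ i ∈ s, ∑ j ∈ s, q i * q j * R i j := by
  have row : ∀ i ∈ s, ∑ j ∈ s, q i * q j / 2 * (F i + 2 * R i j + G j)
      = q i * F i / 2 + (∑ j ∈ s, q i * q j * R i j) + q i / 2 * (∑ j ∈ s, q j * G j) := by
    intro i _
    have : ∀ j ∈ s, q i * q j / 2 * (F i + 2 * R i j + G j)
        = (q i * F i / 2) * q j + q i * q j * R i j + (q i / 2) * (q j * G j) := by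
      intro j _; ring
    rw [Finset.sum_congr rfl this]
    simp only [Finset.sum_add_distrib, ← Finset.mul_sum, ← Finset.sum_mul, hq]
    ring
  rw [Finset.sum_congr rfl row]
  simp only [Finset.sum_add_distrib, ← Finset.sum_mul, ← Finset.sum_div, hq, mul_add,
    Finset.sum_add_distrib]
  ring

lemma side_bound {E : Type*} [NormedAddCommGroup E] [InnerProductSpace ℂ E]
    {ι : Type*} (s : Finset ι) (p : ι → ℝ) (hp : ∀ i ∈ s, 0 ≤ p i)
    (hpsum : ∑ i ∈ s, p i = 1) (x u : ι → E) (ε : ℝ)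
    (hb : ∀ i ∈ s, ‖x i‖ ^ 2 + ‖u i‖ ^ 2 ≤ 2 * ε) :
    ∑ i ∈ s, ∑ j ∈ s, p i * p j / 2 * ‖x i + u j‖ ^ 2
      ≤ ε + (⟪∑ i ∈ s, (p i : ℂ) • x i, ∑ i ∈ s, (p i : ℂ) • u i⟫).re := by
  have hcross : (⟪∑ i ∈ s, (p i : ℂ) • x i, ∑ i ∈ s, (p i : ℂ) • u i⟫).re
      = ∑ i ∈ s, ∑ j ∈ s, p i * p j * (⟪x i, u j⟫).re := by
    rw [sum_inner, Complex.re_sum]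
    refine Finset.sum_congr rfl fun i _ => ?_
    rw [inner_smul_left, Complex.conj_ofReal, inner_sum, Finset.mul_sum, Complex.re_sum]
    refine Finset.sum_congr rfl fun j _ => ?_
    rw [inner_smul_right]
    simp [Complex.mul_re]
    ring
  have hexp : ∀ (i j : ι), ‖x i + u j‖ ^ 2
      = ‖x i‖ ^ 2 + 2 * (⟪x i, u j⟫).re + ‖u j‖ ^ 2 := by
    intro i j
    have := norm_add_sq (𝕜 := ℂ) (x i) (u j)
    simpa using this
  calc ∑ i ∈ s, ∑ j ∈ s, p i * p j / 2 * ‖x i + u j‖ ^ 2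
      = (∑ i ∈ s, p i * (‖x i‖ ^ 2 + ‖u i‖ ^ 2)) / 2
        + ∑ i ∈ s, ∑ j ∈ s, p i * p j * (⟪x i, u j⟫).re := by
        rw [← double_sum_expand s p hpsum (fun i => ‖x i‖ ^ 2) (fun i => ‖u i‖ ^ 2)
          (fun i j => (⟪x i, u j⟫).re)]
        refine Finset.sum_congr rfl fun i _ => Finset.sum_congr rfl fun j _ => ?_
        rw [hexp i j]
    _ ≤ ε + ∑ i ∈ s, ∑ j ∈ s, p i * p j * (⟪x i, u j⟫).re := by
        have h2 : ∑ i ∈ s, p i * (‖x i‖ ^ 2 + ‖u i‖ ^ 2) ≤ ∑ i ∈ s, p i * (2 * ε) := by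
          refine Finset.sum_le_sum fun i hi => ?_
          exact mul_le_mul_of_nonneg_left (hb i hi) (hp i hi)
        rw [← Finset.sum_mul, hpsum, one_mul] at h2
        linarith
    _ = ε + (⟪∑ i ∈ s, (p i : ℂ) • x i, ∑ i ∈ s, (p i : ℂ) • u i⟫).re := by rw [hcross]

end Aux

theorem n_two_inequality_thirty_two
    (NA NB : ℕ) (hNA : 2 ≤ NA) (hNB : 2 ≤ NB)
    (E₁A E₂A : Matrix (Fin NA) (Fin NA) ℂ →ₗ[ℂ] Matrix (Fin NA) (Fin NA) ℂ)
    (E₁B E₂B : Matrix (Fin NB) (Fin NB) ℂ →ₗ[ℂ] Matrix (Fin NB) (Fin NB) ℂ)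
    (εA εB : ℝ) (hεA : 0 ≤ εA) (hεB : 0 ≤ εB)
    (hboundA : ∀ σ₁ σ₂ : Matrix (Fin NA) (Fin NA) ℂ,
      IsDensityMatrix σ₁ → IsDensityMatrix σ₂ →
        hsNorm (E₁A σ₁) ^ 2 + hsNorm (E₂A σ₂) ^ 2 ≤ 2 * εA)
    (hboundB : ∀ τ₁ τ₂ : Matrix (Fin NB) (Fin NB) ℂ,
      IsDensityMatrix τ₁ → IsDensityMatrix τ₂ →
        hsNorm (E₁B τ₁) ^ 2 + hsNorm (E₂B τ₂) ^ 2 ≤ 2 * εB)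
    {ι : Type} (s : Finset ι) (p : ι → ℝ)
    (ρA : ι → Matrix (Fin NA) (Fin NA) ℂ) (ρB : ι → Matrix (Fin NB) (Fin NB) ℂ)
    (hp : ∀ i ∈ s, 0 < p i) (hpsum : ∑ i ∈ s, p i = 1)
    (hρA : ∀ i ∈ s, IsDensityMatrix (ρA i)) (hρB : ∀ i ∈ s, IsDensityMatrix (ρB i))
    (ρ : Matrix (Fin NA × Fin NB) (Fin NA × Fin NB) ℂ)
    (hρ : ρ = ∑ i ∈ s, (p i : ℂ) • (ρA i ⊗ₖ ρB i))
    (ρmA : Matrix (Fin NA) (Fin NA) ℂ) (ρmB : Matrix (Fin NB) (Fin NB) ℂ)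
    (hρmA : ρmA = ∑ i ∈ s, (p i : ℂ) • ρA i) (hρmB : ρmB = ∑ i ∈ s, (p i : ℂ) • ρB i)
    (M : Matrix (Fin NA × Fin NB) (Fin NA × Fin NB) ℂ)
    (hM : M = (1 / 2 : ℂ) • ∑ i ∈ s, (p i : ℂ) •
          (E₁A (ρA i) ⊗ₖ E₁B (ρB i) + E₂A (ρA i) ⊗ₖ E₂B (ρB i))
        + (1 / 2 : ℂ) • (E₁A ρmA ⊗ₖ E₂B ρmB + E₂A ρmA ⊗ₖ E₁B ρmB)) :
    traceNorm (realign M) ≤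
      Real.sqrt (εA + (hsInner (E₁A ρmA) (E₂A ρmA)).re)
        * Real.sqrt (εB + (hsInner (E₁B ρmB) (E₂B ρmB)).re) := by
  classical
  set xA : ι → EuclideanSpace ℂ (Fin NA × Fin NA) := fun i => vecL (E₁A (ρA i)) with hxA
  set uA : ι → EuclideanSpace ℂ (Fin NA × Fin NA) := fun i => vecL (E₂A (ρA i)) with huA
  set yB : ι → EuclideanSpace ℂ (Fin NB × Fin NB) := fun i => vecL (E₁B (ρB i)) with hyB
  set vB : ι → EuclideanSpace ℂ (Fin NB × Fin NB) := fun i => vecL (E₂B (ρB i)) with hvB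
  set r : ι × ι → ℝ := fun a => Real.sqrt (p a.1 * p a.2 / 2) with hr
  set X : ι × ι → EuclideanSpace ℂ (Fin NA × Fin NA) :=
    fun a => ((r a : ℝ) : ℂ) • (xA a.1 + uA a.2) with hX
  set Y : ι × ι → EuclideanSpace ℂ (Fin NB × Fin NB) :=
    fun a => ((r a : ℝ) : ℂ) • (yB a.1 + vB a.2) with hY
  have hqs : ∑ i ∈ s, (p i : ℂ) = 1 := by exact_mod_cast congrArg (Complex.ofReal) hpsum
  -- marginal linearity
  have hmE1A : E₁A ρmA = ∑ i ∈ s, (p i : ℂ) • E₁A (ρA i) := by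
    rw [hρmA, map_sum]; exact Finset.sum_congr rfl fun i _ => map_smul _ _ _
  have hmE2A : E₂A ρmA = ∑ i ∈ s, (p i : ℂ) • E₂A (ρA i) := by
    rw [hρmA, map_sum]; exact Finset.sum_congr rfl fun i _ => map_smul _ _ _
  have hmE1B : E₁B ρmB = ∑ i ∈ s, (p i : ℂ) • E₁B (ρB i) := by
    rw [hρmB, map_sum]; exact Finset.sum_congr rfl fun i _ => map_smul _ _ _
  have hmE2B : E₂B ρmB = ∑ i ∈ s, (p i : ℂ) • E₂B (ρB i) := by
    rw [hρmB, map_sum]; exact Finset.sum_congr rfl fun i _ => map_smul _ _ _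
  have hvA1 : vecL (E₁A ρmA) = ∑ i ∈ s, (p i : ℂ) • xA i := by
    rw [hmE1A, map_sum]; exact Finset.sum_congr rfl fun i _ => map_smul _ _ _
  have hvA2 : vecL (E₂A ρmA) = ∑ i ∈ s, (p i : ℂ) • uA i := by
    rw [hmE2A, map_sum]; exact Finset.sum_congr rfl fun i _ => map_smul _ _ _
  have hvB1 : vecL (E₁B ρmB) = ∑ i ∈ s, (p i : ℂ) • yB i := by
    rw [hmE1B, map_sum]; exact Finset.sum_congr rfl fun i _ => map_smul _ _ _
  have hvB2 : vecL (E₂B ρmB) = ∑ i ∈ s, (p i : ℂ) • vB i := by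
    rw [hmE2B, map_sum]; exact Finset.sum_congr rfl fun i _ => map_smul _ _ _
  -- r squared
  have hrpos : ∀ i ∈ s, ∀ j ∈ s, 0 ≤ p i * p j / 2 := by
    intro i hi j hj
    have := (hp i hi).le; have := (hp j hj).le
    positivity
  have hr2 : ∀ i ∈ s, ∀ j ∈ s, ((r (i, j) : ℂ)) * (r (i, j)) = ((p i : ℂ) * (p j)) / 2 := by
    intro i hi j hj
    rw [hr, ← Complex.ofReal_mul, Real.mul_self_sqrt (hrpos i hi j hj)]
    push_cast; ring
  have hr2' : ∀ i ∈ s, ∀ j ∈ s, (r (i, j)) ^ 2 = p i * p j / 2 := by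
    intro i hi j hj
    rw [hr, Real.sq_sqrt (hrpos i hi j hj)]
  -- entrywise identity
  have hent : ∀ P Q, realign M P Q = ∑ a ∈ s ×ˢ s, X a P * Y a Q := by
    intro P Q
    have hRHS : ∑ a ∈ s ×ˢ s, X a P * Y a Q
        = ∑ i ∈ s, ∑ j ∈ s, ((p i : ℂ) * (p j)) / 2 *
            ((xA i P + uA j P) * (yB i Q + vB j Q)) := by
      rw [Finset.sum_product]
      refine Finset.sum_congr rfl fun i hi => Finset.sum_congr rfl fun j hj => ?_
      have h1 := hr2 i hi j hj
      calc X (i, j) P * Y (i, j) Q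
          = ((r (i, j) : ℂ) * (r (i, j))) * ((xA i P + uA j P) * (yB i Q + vB j Q)) := by
            simp only [hX, hY, PiLp.smul_apply, PiLp.add_apply, smul_eq_mul]
            ring
        _ = ((p i : ℂ) * (p j)) / 2 * ((xA i P + uA j P) * (yB i Q + vB j Q)) := by rw [h1]
    rw [hRHS]
    -- entries of the marginal images
    have e1A : E₁A ρmA P.1 P.2 = ∑ i ∈ s, (p i : ℂ) * (E₁A (ρA i) P.1 P.2) := by
      rw [hmE1A]; simp [Matrix.sum_apply]
    have e2A : E₂A ρmA P.1 P.2 = ∑ i ∈ s, (p i : ℂ) * (E₂A (ρA i) P.1 P.2) := by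
      rw [hmE2A]; simp [Matrix.sum_apply]
    have e1B : E₁B ρmB Q.1 Q.2 = ∑ i ∈ s, (p i : ℂ) * (E₁B (ρB i) Q.1 Q.2) := by
      rw [hmE1B]; simp [Matrix.sum_apply]
    have e2B : E₂B ρmB Q.1 Q.2 = ∑ i ∈ s, (p i : ℂ) * (E₂B (ρB i) Q.1 Q.2) := by
      rw [hmE2B]; simp [Matrix.sum_apply]
    have hLHS : realign M P Q
        = (1/2 : ℂ) * (∑ i ∈ s, (p i : ℂ) *
              (E₁A (ρA i) P.1 P.2 * E₁B (ρB i) Q.1 Q.2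
                + E₂A (ρA i) P.1 P.2 * E₂B (ρB i) Q.1 Q.2))
          + (1/2 : ℂ) * (E₁A ρmA P.1 P.2 * E₂B ρmB Q.1 Q.2
                + E₂A ρmA P.1 P.2 * E₁B ρmB Q.1 Q.2) := by
      show M (P.1, Q.1) (P.2, Q.2) = _
      rw [hM]
      simp [Matrix.add_apply, Matrix.smul_apply, Matrix.sum_apply, Matrix.kroneckerMap_apply,
        smul_eq_mul, mul_add, Finset.sum_add_distrib]
    rw [hLHS, e1A, e2A, e1B, e2B]
    have expand := expand_sum_complex s (fun i => (p i : ℂ)) hqs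
      (fun i => E₁A (ρA i) P.1 P.2) (fun i => E₂A (ρA i) P.1 P.2)
      (fun i => E₁B (ρB i) Q.1 Q.2) (fun i => E₂B (ρB i) Q.1 Q.2)
    have hXP : ∀ i, xA i P = E₁A (ρA i) P.1 P.2 := fun i => rfl
    have hUP : ∀ i, uA i P = E₂A (ρA i) P.1 P.2 := fun i => rfl
    have hYQ : ∀ i, yB i Q = E₁B (ρB i) Q.1 Q.2 := fun i => rfl
    have hVQ : ∀ i, vB i Q = E₂B (ρB i) Q.1 Q.2 := fun i => rfl
    simp only [hXP, hUP, hYQ, hVQ]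
    have hhalf : ∀ (z : ℂ), ∑ i ∈ s, ∑ j ∈ s, ((p i : ℂ) * (p j)) / 2 *
            ((E₁A (ρA i) P.1 P.2 + E₂A (ρA j) P.1 P.2) * (E₁B (ρB i) Q.1 Q.2 + E₂B (ρB j) Q.1 Q.2))
        = (1/2 : ℂ) * ∑ i ∈ s, ∑ j ∈ s, (p i : ℂ) * (p j) *
            ((E₁A (ρA i) P.1 P.2 + E₂A (ρA j) P.1 P.2) * (E₁B (ρB i) Q.1 Q.2 + E₂B (ρB j) Q.1 Q.2)) := by
      intro _
      rw [Finset.mul_sum]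
      refine Finset.sum_congr rfl fun i _ => ?_
      rw [Finset.mul_sum]
      refine Finset.sum_congr rfl fun j _ => ?_
      ring
    rw [hhalf 0, expand]
    simp only [mul_add, Finset.sum_add_distrib]
    ring
  -- apply the rank-one bound
  have hmain := traceNorm_le_of_rank_one (realign M) (s ×ˢ s) X Y hent
  have hCS : ∑ a ∈ s ×ˢ s, ‖X a‖ * ‖Y a‖
      ≤ Real.sqrt (∑ a ∈ s ×ˢ s, ‖X a‖ ^ 2) * Real.sqrt (∑ a ∈ s ×ˢ s, ‖Y a‖ ^ 2) :=
    Real.sum_mul_le_sqrt_mul_sqrt _ _ _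
  -- compute the squared sums
  have hXsq : ∑ a ∈ s ×ˢ s, ‖X a‖ ^ 2
      = ∑ i ∈ s, ∑ j ∈ s, p i * p j / 2 * ‖xA i + uA j‖ ^ 2 := by
    rw [Finset.sum_product]
    refine Finset.sum_congr rfl fun i hi => Finset.sum_congr rfl fun j hj => ?_
    rw [hX]
    simp only [norm_smul, _root_.Complex.norm_real, mul_pow, Real.norm_eq_abs, _root_.sq_abs]
    rw [hr2' i hi j hj]
  have hYsq : ∑ a ∈ s ×ˢ s, ‖Y a‖ ^ 2
      = ∑ i ∈ s, ∑ j ∈ s, p i * p j / 2 * ‖yB i + vB j‖ ^ 2 := by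
    rw [Finset.sum_product]
    refine Finset.sum_congr rfl fun i hi => Finset.sum_congr rfl fun j hj => ?_
    rw [hY]
    simp only [norm_smul, _root_.Complex.norm_real, mul_pow, Real.norm_eq_abs, _root_.sq_abs]
    rw [hr2' i hi j hj]
  have hbA : ∀ i ∈ s, ‖xA i‖ ^ 2 + ‖uA i‖ ^ 2 ≤ 2 * εA := by
    intro i hi
    rw [hxA, huA]
    simp only [norm_vecL]
    exact hboundA (ρA i) (ρA i) (hρA i hi) (hρA i hi)
  have hbB : ∀ i ∈ s, ‖yB i‖ ^ 2 + ‖vB i‖ ^ 2 ≤ 2 * εB := by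
    intro i hi
    rw [hyB, hvB]
    simp only [norm_vecL]
    exact hboundB (ρB i) (ρB i) (hρB i hi) (hρB i hi)
  have hboundXA : ∑ a ∈ s ×ˢ s, ‖X a‖ ^ 2 ≤ εA + (hsInner (E₁A ρmA) (E₂A ρmA)).re := by
    rw [hXsq]
    have := side_bound s p (fun i hi => (hp i hi).le) hpsum xA uA εA hbA
    rwa [← hvA1, ← hvA2, inner_vecL] at this
  have hboundYB : ∑ a ∈ s ×ˢ s, ‖Y a‖ ^ 2 ≤ εB + (hsInner (E₁B ρmB) (E₂B ρmB)).re := by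
    rw [hYsq]
    have := side_bound s p (fun i hi => (hp i hi).le) hpsum yB vB εB hbB
    rwa [← hvB1, ← hvB2, inner_vecL] at this
  calc traceNorm (realign M) ≤ ∑ a ∈ s ×ˢ s, ‖X a‖ * ‖Y a‖ := hmain
    _ ≤ Real.sqrt (∑ a ∈ s ×ˢ s, ‖X a‖ ^ 2) * Real.sqrt (∑ a ∈ s ×ˢ s, ‖Y a‖ ^ 2) := hCS
    _ ≤ Real.sqrt (εA + (hsInner (E₁A ρmA) (E₂A ρmA)).re)
        * Real.sqrt (εB + (hsInner (E₁B ρmB) (E₂B ρmB)).re) := by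
        exact mul_le_mul (Real.sqrt_le_sqrt hboundXA) (Real.sqrt_le_sqrt hboundYB)
          (Real.sqrt_nonneg _) (Real.sqrt_nonneg _)
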